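/- (Rule of Connected Components) Let A and B be the z-matrix and w-matrix of a singular sequence and C = A + B. If I is a connected component of A, then: (i) Σ_{i∈I} a_{ii} ≠ 1; and (ii) if a_{ii} = 1 for all i ∈ I, then there exist distinct i, j ∈ I with c_{ij} ≠ 2. Likewise, if I is a connected component of B, then Σ_{i∈I} b_{ii} ≠ 1, and if b_{ii} = 1 for all i ∈ I, then there exist distinct i, j ∈ I with c_{ij} ≠ 2. -/

import Mathlib

open Filter Finset

/-- `Zq δ z k l` is the quantity `Z_{lk} = δ_{kl}^3 · (z_k − z_l)`
(and, applied to `w`, the quantity `W_{lk}`). -/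
noncomputable def Zq {n : ℕ} (δ : Fin n → Fin n → ℂ) (z : Fin n → ℂ) (k l : Fin n) : ℂ :=
  δ k l ^ 3 * (z k - z l)

/-- A singular sequence of normalized central configurations for the masses `m`:
sequences `z^{(N)}, w^{(N)} ∈ ℂ^n`, symmetric `δ^{(N)}`, and positive reals `ε_N → 0`
such that every term satisfies the central configuration equations
`z_k = ∑_{l≠k} m_l Z_{lk}`, `w_k = ∑_{l≠k} m_l W_{lk}`, the normalization
`δ_{kl}^2 z_{kl} w_{kl} = 1` (`k ≠ l`), the maximum of the `|z_k|, |Z_{kl}|`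
(resp. `|w_k|, |W_{kl}|`) equals `ε_N^{-2}`, and all the sequences
`ε_N^2 z_k, ε_N^2 w_k, ε_N^2 Z_{kl}, ε_N^2 W_{kl}` converge. -/
structure SingularSeq (n : ℕ) (m : Fin n → ℂ) : Type where
  z : ℕ → Fin n → ℂ
  w : ℕ → Fin n → ℂ
  delta : ℕ → Fin n → Fin n → ℂ
  eps : ℕ → ℝ
  eps_pos : ∀ N, 0 < eps N
  eps_lim : Tendsto eps atTop (nhds 0)
  delta_symm : ∀ N, ∀ k l : Fin n, delta N k l = delta N l k
  eq_z : ∀ N, ∀ k : Fin n, z N k = ∑ l ∈ univ.erase k, m l * Zq (delta N) (z N) k l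
  eq_w : ∀ N, ∀ k : Fin n, w N k = ∑ l ∈ univ.erase k, m l * Zq (delta N) (w N) k l
  normalize : ∀ N, ∀ k l : Fin n, k ≠ l →
    delta N k l ^ 2 * (z N l - z N k) * (w N l - w N k) = 1
  maxZ : ∀ N, IsGreatest
      ({x : ℝ | ∃ k, x = ‖z N k‖} ∪
        {x : ℝ | ∃ k l, k ≠ l ∧ x = ‖Zq (delta N) (z N) k l‖})
      (eps N ^ (-2 : ℤ))
  maxW : ∀ N, IsGreatest
      ({x : ℝ | ∃ k, x = ‖w N k‖} ∪
        {x : ℝ | ∃ k l, k ≠ l ∧ x = ‖Zq (delta N) (w N) k l‖})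
      (eps N ^ (-2 : ℤ))
  conv_z : ∀ k : Fin n, ∃ L : ℂ,
    Tendsto (fun N => (eps N : ℂ) ^ 2 * z N k) atTop (nhds L)
  conv_w : ∀ k : Fin n, ∃ L : ℂ,
    Tendsto (fun N => (eps N : ℂ) ^ 2 * w N k) atTop (nhds L)
  conv_Z : ∀ k l : Fin n, k ≠ l → ∃ L : ℂ,
    Tendsto (fun N => (eps N : ℂ) ^ 2 * Zq (delta N) (z N) k l) atTop (nhds L)
  conv_W : ∀ k l : Fin n, k ≠ l → ∃ L : ℂ,
    Tendsto (fun N => (eps N : ℂ) ^ 2 * Zq (delta N) (w N) k l) atTop (nhds L)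

/-- `A` and `B` are the z-matrix and the w-matrix of the singular sequence `S`:
symmetric `{0,1}`-matrices whose entries record which of the (convergent) sequences
`ε_N^2 z_i`, `ε_N^2 Z_{ij}` (resp. `ε_N^2 w_i`, `ε_N^2 W_{ij}`) have nonzero limit. -/
structure IsZWMatrices {n : ℕ} {m : Fin n → ℂ} (S : SingularSeq n m)
    (A B : Matrix (Fin n) (Fin n) ℕ) : Prop where
  zeroOne_A : ∀ i j, A i j = 0 ∨ A i j = 1
  symm_A : ∀ i j, A i j = A j i
  zeroOne_B : ∀ i j, B i j = 0 ∨ B i j = 1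
  symm_B : ∀ i j, B i j = B j i
  diag_A : ∀ i, A i i = 1 ↔
    ¬ Tendsto (fun N => (S.eps N : ℂ) ^ 2 * S.z N i) atTop (nhds 0)
  off_A : ∀ i j, i ≠ j → (A i j = 1 ↔
    ¬ Tendsto (fun N => (S.eps N : ℂ) ^ 2 * Zq (S.delta N) (S.z N) i j) atTop (nhds 0))
  diag_B : ∀ i, B i i = 1 ↔
    ¬ Tendsto (fun N => (S.eps N : ℂ) ^ 2 * S.w N i) atTop (nhds 0)
  off_B : ∀ i j, i ≠ j → (B i j = 1 ↔
    ¬ Tendsto (fun N => (S.eps N : ℂ) ^ 2 * Zq (S.delta N) (S.w N) i j) atTop (nhds 0))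

/-- The stroke graph of a matrix: an edge between `i` and `j` (`i ≠ j`) iff the
corresponding entry equals `1` (the matrices in question are symmetric). -/
def strokeGraph {n : ℕ} (A : Matrix (Fin n) (Fin n) ℕ) : SimpleGraph (Fin n) where
  Adj i j := i ≠ j ∧ A i j = 1 ∧ A j i = 1
  symm := ⟨fun _ _ h => ⟨h.1.symm, h.2.2, h.2.1⟩⟩
  loopless := ⟨fun _ h => h.1 rfl⟩

/-- `I` is (the vertex set of) a connected component of the stroke graph of `A`. -/
def IsComponent {n : ℕ} (A : Matrix (Fin n) (Fin n) ℕ) (I : Finset (Fin n)) : Prop :=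
  ∃ v : Fin n, ∀ u : Fin n, u ∈ I ↔ (strokeGraph A).Reachable u v

private lemma sum_antisym {α : Type*} (s : Finset α) (g : α → α → ℂ)
    (hg : ∀ k l, g k l = - g l k) : ∑ k ∈ s, ∑ l ∈ s, g k l = 0 := by
  have h : ∑ k ∈ s, ∑ l ∈ s, g k l = - ∑ k ∈ s, ∑ l ∈ s, g k l := by
    calc ∑ k ∈ s, ∑ l ∈ s, g k l
        = ∑ k ∈ s, ∑ l ∈ s, -(g l k) :=
          Finset.sum_congr rfl fun k _ => Finset.sum_congr rfl fun l _ => hg k l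
      _ = - ∑ k ∈ s, ∑ l ∈ s, g l k := by simp
      _ = - ∑ k ∈ s, ∑ l ∈ s, g k l := by rw [Finset.sum_comm]
  linear_combination h / 2

/-- Swap the roles of `z` and `w` in a singular sequence. -/
noncomputable def SingularSeq.swap {n : ℕ} {m : Fin n → ℂ} (S : SingularSeq n m) :
    SingularSeq n m where
  z := S.w
  w := S.z
  delta := S.delta
  eps := S.eps
  eps_pos := S.eps_pos
  eps_lim := S.eps_lim
  delta_symm := S.delta_symm
  eq_z := S.eq_w
  eq_w := S.eq_z
  normalize := fun N k l h => by linear_combination S.normalize N k l h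
  maxZ := S.maxW
  maxW := S.maxZ
  conv_z := S.conv_w
  conv_w := S.conv_z
  conv_Z := S.conv_W
  conv_W := S.conv_Z

lemma IsZWMatrices.swap {n : ℕ} {m : Fin n → ℂ} {S : SingularSeq n m}
    {A B : Matrix (Fin n) (Fin n) ℕ} (h : IsZWMatrices S A B) :
    IsZWMatrices S.swap B A :=
  ⟨h.zeroOne_B, h.symm_B, h.zeroOne_A, h.symm_A, h.diag_B, h.off_B, h.diag_A, h.off_A⟩

lemma ruleA (n : ℕ) (m : Fin n → ℂ)
    (hm : ∀ I : Finset (Fin n), I.Nonempty → ∑ k ∈ I, m k ≠ 0)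
    (S : SingularSeq n m) (A B : Matrix (Fin n) (Fin n) ℕ)
    (hAB : IsZWMatrices S A B) (I : Finset (Fin n)) (hI : IsComponent A I) :
    (∑ i ∈ I, A i i) ≠ 1 ∧
      ((∀ i ∈ I, A i i = 1) → ∃ i ∈ I, ∃ j ∈ I, i ≠ j ∧ A i j + B i j ≠ 2) := by
  obtain ⟨v, hv⟩ := hI
  have hvI : v ∈ I := (hv v).mpr (SimpleGraph.Reachable.refl v)
  -- limits
  choose ζ hζ using S.conv_z
  choose ω hω using S.conv_w
  choose! ZL hZL using S.conv_Z
  choose! WL hWL using S.conv_W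
  -- basic nonvanishing / vanishing facts
  have hζne : ∀ i, A i i = 1 → ζ i ≠ 0 := fun i h1 h0 =>
    ((hAB.diag_A i).mp h1) (h0 ▸ hζ i)
  have hζzero : ∀ i, A i i = 0 → ζ i = 0 := fun i h0 =>
    tendsto_nhds_unique (hζ i)
      (not_not.mp fun hT => absurd ((hAB.diag_A i).mpr hT) (by omega))
  have hZne : ∀ k l (hkl : k ≠ l), A k l = 1 → ZL k l ≠ 0 := fun k l hkl h1 h0 =>
    ((hAB.off_A k l hkl).mp h1) (h0 ▸ hZL k l hkl)
  have hWne : ∀ k l (hkl : k ≠ l), B k l = 1 → WL k l ≠ 0 := fun k l hkl h1 h0 =>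
    ((hAB.off_B k l hkl).mp h1) (h0 ▸ hWL k l hkl)
  -- ε → 0 (as complexes) and ε^12 → 0
  have hε0 : Tendsto (fun N => ((S.eps N : ℂ))) atTop (nhds 0) := by
    have := (Complex.continuous_ofReal.tendsto (0 : ℝ)).comp S.eps_lim
    simpa [Function.comp_def] using this
  have hε12 : Tendsto (fun N => ((S.eps N : ℂ)) ^ 12) atTop (nhds 0) := by
    simpa using hε0.pow 12
  -- strokes leaving the component vanish in the limit
  have step0 : ∀ k ∈ I, ∀ l ∉ I,
      Tendsto (fun N => (S.eps N : ℂ) ^ 2 * Zq (S.delta N) (S.z N) k l) atTop (nhds 0) := by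
    intro k hk l hl
    have hkl : k ≠ l := by rintro rfl; exact hl hk
    have hA0 : A k l = 0 := by
      rcases hAB.zeroOne_A k l with h0 | h1
      · exact h0
      · exfalso
        have hadj : (strokeGraph A).Adj l k :=
          ⟨hkl.symm, (hAB.symm_A l k).trans h1, h1⟩
        exact hl ((hv l).mpr (hadj.reachable.trans ((hv k).mp hk)))
    exact not_not.mp fun hT => absurd ((hAB.off_A k l hkl).mpr hT) (by omega)
  -- the key identity: ∑_{k∈I} m_k z_k = cross terms only
  have e1 : ∀ N, ∑ k ∈ I, m k * S.z N k
      = ∑ k ∈ I, ∑ l ∈ Iᶜ, m k * m l * Zq (S.delta N) (S.z N) k l := by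
    intro N
    set g : Fin n → Fin n → ℂ :=
      fun k l => if k = l then 0 else m k * m l * Zq (S.delta N) (S.z N) k l with hgdef
    have hga : ∀ k l, g k l = - g l k := by
      intro k l
      by_cases h : k = l
      · subst h; simp [g]
      · simp only [g, if_neg h, if_neg (Ne.symm h), Zq]
        rw [S.delta_symm N k l]; ring
    have e2 : ∀ k ∈ I, m k * S.z N k = ∑ l ∈ I, g k l + ∑ l ∈ Iᶜ, g k l := by
      intro k hk
      rw [Finset.sum_add_sum_compl I (g k), S.eq_z N k, Finset.mul_sum]
      calc ∑ l ∈ univ.erase k, m k * (m l * Zq (S.delta N) (S.z N) k l)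
          = ∑ l ∈ univ.erase k, g k l := by
            refine Finset.sum_congr rfl fun l hl => ?_
            have hlk : l ≠ k := Finset.ne_of_mem_erase hl
            simp only [g, if_neg (Ne.symm hlk)]; ring
        _ = ∑ l ∈ univ, g k l := Finset.sum_erase _ (by simp [g])
    calc ∑ k ∈ I, m k * S.z N k
        = ∑ k ∈ I, (∑ l ∈ I, g k l + ∑ l ∈ Iᶜ, g k l) := Finset.sum_congr rfl e2
      _ = (∑ k ∈ I, ∑ l ∈ I, g k l) + ∑ k ∈ I, ∑ l ∈ Iᶜ, g k l := Finset.sum_add_distrib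
      _ = ∑ k ∈ I, ∑ l ∈ Iᶜ, g k l := by rw [sum_antisym I g hga, zero_add]
      _ = ∑ k ∈ I, ∑ l ∈ Iᶜ, m k * m l * Zq (S.delta N) (S.z N) k l := by
          refine Finset.sum_congr rfl fun k hk => Finset.sum_congr rfl fun l hl => ?_
          have hkl : k ≠ l := by
            rintro rfl; exact (Finset.mem_compl.mp hl) hk
          simp only [g, if_neg hkl]
  -- hence ∑_{k∈I} m_k ζ_k = 0
  have hsum0 : Tendsto (fun N => ∑ k ∈ I, m k * ((S.eps N : ℂ) ^ 2 * S.z N k))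
      atTop (nhds 0) := by
    have hcongr : ∀ N, ∑ k ∈ I, m k * ((S.eps N : ℂ) ^ 2 * S.z N k)
        = ∑ k ∈ I, ∑ l ∈ Iᶜ,
            (m k * m l) * ((S.eps N : ℂ) ^ 2 * Zq (S.delta N) (S.z N) k l) := by
      intro N
      calc ∑ k ∈ I, m k * ((S.eps N : ℂ) ^ 2 * S.z N k)
          = (S.eps N : ℂ) ^ 2 * ∑ k ∈ I, m k * S.z N k := by
            rw [Finset.mul_sum]; exact Finset.sum_congr rfl fun k _ => by ring
        _ = (S.eps N : ℂ) ^ 2 * ∑ k ∈ I, ∑ l ∈ Iᶜ, m k * m l * Zq (S.delta N) (S.z N) k l := by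
            rw [e1 N]
        _ = _ := by
            rw [Finset.mul_sum]
            refine Finset.sum_congr rfl fun k _ => ?_
            rw [Finset.mul_sum]
            exact Finset.sum_congr rfl fun l _ => by ring
    refine (tendsto_congr hcongr).mpr ?_
    have : Tendsto (fun N => ∑ k ∈ I, ∑ l ∈ Iᶜ,
        (m k * m l) * ((S.eps N : ℂ) ^ 2 * Zq (S.delta N) (S.z N) k l))
        atTop (nhds (∑ k ∈ I, ∑ l ∈ Iᶜ, (m k * m l) * 0)) :=
      tendsto_finset_sum _ fun k hk => tendsto_finset_sum _ fun l hl =>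
        (step0 k hk l (Finset.mem_compl.mp hl)).const_mul _
    simpa using this
  have HS : ∑ k ∈ I, m k * ζ k = 0 :=
    tendsto_nhds_unique
      (tendsto_finset_sum _ fun k _ => (hζ k).const_mul (m k)) hsum0
  constructor
  · -- part (i)
    intro hsum1
    obtain ⟨i₀, hi₀, hne0⟩ :=
      Finset.exists_ne_zero_of_sum_ne_zero (f := fun i => A i i)
        (by rw [hsum1]; exact one_ne_zero)
    have hA1 : A i₀ i₀ = 1 := (hAB.zeroOne_A i₀ i₀).resolve_left hne0
    have hrest : ∀ j ∈ I.erase i₀, A j j = 0 := by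
      have h : A i₀ i₀ + ∑ j ∈ I.erase i₀, A j j = ∑ j ∈ I, A j j :=
        Finset.add_sum_erase I (fun i => A i i) hi₀
      have hz : ∑ j ∈ I.erase i₀, A j j = 0 := by omega
      exact fun j hj => (Finset.sum_eq_zero_iff.mp hz) j hj
    have hsingle : ∑ k ∈ I, m k * ζ k = m i₀ * ζ i₀ :=
      Finset.sum_eq_single_of_mem i₀ hi₀ fun j hj hne => by
        rw [hζzero j (hrest j (Finset.mem_erase.mpr ⟨hne, hj⟩)), mul_zero]
    have hm0 : m i₀ = 0 :=
      (mul_eq_zero.mp (hsingle ▸ HS)).resolve_right (hζne i₀ hA1)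
    exact hm {i₀} (Finset.singleton_nonempty i₀) (by simpa using hm0)
  · -- part (ii)
    intro hall
    by_contra hcon
    push_neg at hcon
    have hpair : ∀ k ∈ I, ∀ l ∈ I, k ≠ l → ζ k = ζ l := by
      intro k hk l hl hkl
      have h2 := hcon k hk l hl hkl
      have hA1 : A k l = 1 := by
        rcases hAB.zeroOne_A k l with h' | h' <;>
          rcases hAB.zeroOne_B k l with h'' | h'' <;> omega
      have hB1 : B k l = 1 := by
        rcases hAB.zeroOne_A k l with h' | h' <;>
          rcases hAB.zeroOne_B k l with h'' | h'' <;> omega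
      have hZ0 := hZne k l hkl hA1
      have hW0 := hWne k l hkl hB1
      have hzd : Tendsto (fun N => (S.eps N : ℂ) ^ 2 * (S.z N k - S.z N l)) atTop
          (nhds (ζ k - ζ l)) := by
        simpa [mul_sub] using (hζ k).sub (hζ l)
      have hwd : Tendsto (fun N => (S.eps N : ℂ) ^ 2 * (S.w N k - S.w N l)) atTop
          (nhds (ω k - ω l)) := by
        simpa [mul_sub] using (hω k).sub (hω l)
      -- identity 1 : z-difference times W equals w-difference times Z
      have hid1 : ∀ N, ((S.eps N : ℂ) ^ 2 * (S.z N k - S.z N l)) *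
            ((S.eps N : ℂ) ^ 2 * Zq (S.delta N) (S.w N) k l)
          = ((S.eps N : ℂ) ^ 2 * (S.w N k - S.w N l)) *
            ((S.eps N : ℂ) ^ 2 * Zq (S.delta N) (S.z N) k l) := by
        intro N; simp only [Zq]; ring
      have hE1 : (ζ k - ζ l) * WL k l = (ω k - ω l) * ZL k l :=
        tendsto_nhds_unique (hzd.mul (hWL k l hkl))
          ((tendsto_congr hid1).mpr (hwd.mul (hZL k l hkl)))
      -- identity 2 : Z·W·z_{kl}²·w_{kl}² = 1, scaled by ε^12
      have hid2 : ∀ N, ((S.eps N : ℂ) ^ 2 * Zq (S.delta N) (S.z N) k l) *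
            ((S.eps N : ℂ) ^ 2 * Zq (S.delta N) (S.w N) k l) *
            ((S.eps N : ℂ) ^ 2 * (S.z N k - S.z N l)) ^ 2 *
            ((S.eps N : ℂ) ^ 2 * (S.w N k - S.w N l)) ^ 2
          = ((S.eps N : ℂ)) ^ 12 := by
        intro N
        have hnorm := S.normalize N k l hkl
        simp only [Zq]
        linear_combination ((S.eps N : ℂ) ^ 12 *
          ((S.delta N k l ^ 2 * (S.z N l - S.z N k) * (S.w N l - S.w N k)) ^ 2 +
           (S.delta N k l ^ 2 * (S.z N l - S.z N k) * (S.w N l - S.w N k)) + 1)) * hnorm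
      have hE2 : ZL k l * WL k l * (ζ k - ζ l) ^ 2 * (ω k - ω l) ^ 2 = 0 :=
        tendsto_nhds_unique
          ((tendsto_congr hid2).mp
            ((((hZL k l hkl).mul (hWL k l hkl)).mul (hzd.pow 2)).mul (hwd.pow 2)))
          hε12
      by_contra hne
      have hζd : ζ k - ζ l ≠ 0 := sub_ne_zero.mpr hne
      have hωd : ω k - ω l = 0 := by
        by_contra hω0
        exact (mul_ne_zero (mul_ne_zero (mul_ne_zero hZ0 hW0)
          (pow_ne_zero 2 hζd)) (pow_ne_zero 2 hω0))
          (by linear_combination hE2)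
      apply hW0
      have hz0 : (ζ k - ζ l) * WL k l = 0 := by rw [hE1, hωd, zero_mul]
      exact (mul_eq_zero.mp hz0).resolve_left hζd
    have hconst : ∀ k ∈ I, ζ k = ζ v := by
      intro k hk
      by_cases h : k = v
      · rw [h]
      · exact hpair k hk v hvI h
    have hζv : ζ v ≠ 0 := hζne v (hall v hvI)
    have hmul : (∑ k ∈ I, m k) * ζ v = 0 := by
      rw [Finset.sum_mul, ← HS]
      exact Finset.sum_congr rfl fun k hk => by rw [hconst k hk]
    exact hm I ⟨v, hvI⟩ ((mul_eq_zero.mp hmul).resolve_right hζv)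


theorem rule_of_connected_components (n : ℕ) (hn : 2 ≤ n) (m : Fin n → ℂ)
    (hm : ∀ I : Finset (Fin n), I.Nonempty → ∑ k ∈ I, m k ≠ 0)
    (S : SingularSeq n m) (A B : Matrix (Fin n) (Fin n) ℕ)
    (hAB : IsZWMatrices S A B) :
    (∀ I : Finset (Fin n), IsComponent A I →
      (∑ i ∈ I, A i i) ≠ 1 ∧
        ((∀ i ∈ I, A i i = 1) → ∃ i ∈ I, ∃ j ∈ I, i ≠ j ∧ A i j + B i j ≠ 2)) ∧
    (∀ I : Finset (Fin n), IsComponent B I →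
      (∑ i ∈ I, B i i) ≠ 1 ∧
        ((∀ i ∈ I, B i i = 1) → ∃ i ∈ I, ∃ j ∈ I, i ≠ j ∧ A i j + B i j ≠ 2)) := by
  constructor
  · intro I hI
    exact ruleA n m hm S A B hAB I hI
  · intro I hI
    have h := ruleA n m hm S.swap B A hAB.swap I hI
    refine ⟨h.1, fun hall => ?_⟩
    obtain ⟨i, hi, j, hj, hne, h2⟩ := h.2 hall
    exact ⟨i, hi, j, hj, hne, by rwa [Nat.add_comm]⟩
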